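/- With K skew-symmetric, λ = K·L, A = K·Bᵀ·D as in the QPP setup, the vector field F_i(x) = x_i(λ_i + Σ_j A_{ij} Π_k x_k^{B_{jk}}) equals J(x)·∇H(x), where J_{ij}(x) = K_{ij} x_i x_j and H(x) = Σ_i D_{ii} Π_k x_k^{B_{ik}} + Σ_j L_j ln x_j, for every x in the positive orthant. -/

import Mathlib

open Real Finset Matrix

theorem qpp_vector_field_is_poisson (n m : ℕ)
    (K : Matrix (Fin n) (Fin n) ℝ) (hK : Kᵀ = -K)
    (d : Fin m → ℝ) (hd : ∀ i, d i ≠ 0)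
    (B : Matrix (Fin m) (Fin n) ℝ) (hB : B.rank = n)
    (L : Fin n → ℝ)
    (lam : Fin n → ℝ) (hlam : lam = K.mulVec L)
    (A : Matrix (Fin n) (Fin m) ℝ) (hA : A = K * Bᵀ * Matrix.diagonal d)
    (H : (Fin n → ℝ) → ℝ)
    (hH : H = fun x => (∑ i : Fin m, d i * ∏ k : Fin n, x k ^ B i k)
        + ∑ j : Fin n, L j * Real.log (x j))
    (F : (Fin n → ℝ) → (Fin n → ℝ))
    (hF : F = fun x i => x i * (lam i + ∑ j : Fin m, A i j * ∏ k : Fin n, x k ^ B j k)) :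
    ∀ x : Fin n → ℝ, (∀ i, 0 < x i) → ∀ i : Fin n,
      F x i = ∑ j : Fin n, (K i j * x i * x j) * fderiv ℝ H x (Pi.single j 1) := by
  intro x hx i
  have hxne : ∀ j, x j ≠ 0 := fun j => (hx j).ne'
  set P : Fin m → ℝ := fun l => ∏ k, x k ^ B l k with hP
  set Φ : Fin m → (Fin n → ℝ) →L[ℝ] ℝ := fun l =>
    ∑ k, (∏ j ∈ Finset.univ.erase k, x j ^ B l j) •
      ((B l k * x k ^ (B l k - 1)) • (ContinuousLinearMap.proj k : (Fin n → ℝ) →L[ℝ] ℝ)) with hΦ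
  have hprod : ∀ l, HasFDerivAt (fun y : Fin n → ℝ => ∏ k, y k ^ B l k) (Φ l) x := by
    intro l
    apply HasFDerivAt.finset_prod
    intro k _
    exact (hasDerivAt_rpow_const (Or.inl (hxne k))).comp_hasFDerivAt x (hasFDerivAt_apply (𝕜 := ℝ) k x)
  have hlog : ∀ j, HasFDerivAt (fun y : Fin n → ℝ => Real.log (y j))
      ((x j)⁻¹ • (ContinuousLinearMap.proj j : (Fin n → ℝ) →L[ℝ] ℝ)) x := fun j =>
    by have := (Real.hasDerivAt_log (hxne j)).comp_hasFDerivAt x (hasFDerivAt_apply (𝕜 := ℝ) j x); exact this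
  have hH' : HasFDerivAt H
      ((∑ l, d l • Φ l) + ∑ j, L j •
        ((x j)⁻¹ • (ContinuousLinearMap.proj j : (Fin n → ℝ) →L[ℝ] ℝ))) x := by
    rw [hH]
    exact (HasFDerivAt.fun_sum fun l _ => (hprod l).const_mul (d l)).fun_add
      (HasFDerivAt.fun_sum fun j _ => (hlog j).const_mul (L j))
  have hfd := hH'.fderiv
  have hD : ∀ j, fderiv ℝ H x (Pi.single j 1)
      = (∑ l, d l * (B l j * (P l / x j))) + L j / x j := by
    intro j
    rw [hfd]
    simp only [ContinuousLinearMap.add_apply, ContinuousLinearMap.sum_apply,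
      ContinuousLinearMap.smul_apply, ContinuousLinearMap.proj_apply, smul_eq_mul, hΦ, hP]
    congr 1
    · refine Finset.sum_congr rfl fun l _ => ?_
      congr 1
      have key : ∀ k, (∏ j' ∈ Finset.univ.erase k, x j' ^ B l j') *
          (B l k * x k ^ (B l k - 1) * (Pi.single j 1 : Fin n → ℝ) k)
          = if k = j then B l j * ((∏ k', x k' ^ B l k') / x j) else 0 := by
        intro k
        rcases eq_or_ne k j with rfl | hkj
        · simp only [if_pos rfl, ↓reduceIte, Pi.single_eq_same, mul_one]
          rw [Real.rpow_sub (hx k), Real.rpow_one,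
            ← Finset.mul_prod_erase Finset.univ (fun j' => x j' ^ B l j') (Finset.mem_univ k)]
          field_simp
        · simp [Pi.single_eq_of_ne hkj, hkj]
      rw [Finset.sum_congr rfl fun k _ => key k]
      simp
    · have key : ∀ j', L j' * ((x j')⁻¹ * (Pi.single j 1 : Fin n → ℝ) j')
          = if j' = j then L j / x j else 0 := by
        intro j'
        rcases eq_or_ne j' j with rfl | h
        · simp [div_eq_mul_inv]
        · simp [Pi.single_eq_of_ne h, h]
      rw [Finset.sum_congr rfl fun j' _ => key j']
      simp
  have hAe : ∀ l, A i l = (∑ j, K i j * B l j) * d l := by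
    intro l
    rw [hA, Matrix.mul_diagonal, Matrix.mul_apply]
    simp [Matrix.transpose_apply]
  have goalL : F x i = x i * ((∑ j, K i j * L j) + ∑ l, (∑ j, K i j * B l j) * d l * P l) := by
    rw [hF]
    simp only [hlam, Matrix.mulVec, dotProduct, hAe, hP]
  have LHSeq : x i * ((∑ j, K i j * L j) + ∑ l, (∑ j, K i j * B l j) * d l * P l)
      = (∑ j, ∑ l, K i j * x i * d l * B l j * P l) + ∑ j, K i j * x i * L j := by
    rw [mul_add, Finset.mul_sum, Finset.mul_sum, add_comm]
    congr 1
    · rw [Finset.sum_comm]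
      refine Finset.sum_congr rfl fun l _ => ?_
      rw [Finset.sum_mul, Finset.sum_mul, Finset.mul_sum]
      exact Finset.sum_congr rfl fun j _ => by ring
    · exact Finset.sum_congr rfl fun j _ => by ring
  have RHSeq : ∑ j, (K i j * x i * x j) * ((∑ l, d l * (B l j * (P l / x j))) + L j / x j)
      = (∑ j, ∑ l, K i j * x i * d l * B l j * P l) + ∑ j, K i j * x i * L j := by
    rw [← Finset.sum_add_distrib]
    refine Finset.sum_congr rfl fun j _ => ?_
    rw [mul_add, Finset.mul_sum]
    congr 1
    · refine Finset.sum_congr rfl fun l _ => ?_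
      field_simp [hxne j]
    · field_simp [hxne j]
  simp only [hD]
  rw [goalL, LHSeq, ← RHSeq]
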